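/- arXiv:1610.06844 — 6 statements merged into one kernel-verified Lean document; each statement's English description precedes it below -/
import Mathlib

section
/- Let d be a real number with 0 < d < π. For all real numbers s and t, |tanh((s + d·i)/2) − tanh(t/2)|² = (1/cosh²(t/2)) · (cosh(s−t) − cos d)/(cosh s + cos d). -/
open Real Complex

lemma sinh_half_abs_sq (x y : ℝ) :
    ‖Complex.sinh ((x + y * Complex.I) / 2)‖ ^ 2 =
      (Real.cosh x - Real.cos y) / 2 := by
  have h : ((x : ℂ) + y * Complex.I) / 2 = ((x/2 : ℝ) : ℂ) + ((y/2 : ℝ) : ℂ) * Complex.I := by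
    push_cast; ring
  rw [h, Complex.sinh_add, Complex.sinh_mul_I, Complex.cosh_mul_I,
    ← Complex.ofReal_sinh, ← Complex.ofReal_cosh, ← Complex.ofReal_cos, ← Complex.ofReal_sin]
  rw [show (Real.sinh (x/2) : ℂ) * (Real.cos (y/2) : ℂ) + (Real.cosh (x/2) : ℂ) * ((Real.sin (y/2) : ℂ) * Complex.I)
      = ((Real.sinh (x/2) * Real.cos (y/2) : ℝ) : ℂ) + ((Real.cosh (x/2) * Real.sin (y/2) : ℝ) : ℂ) * Complex.I by
    push_cast; ring]
  rw [Complex.sq_norm, Complex.normSq_add_mul_I]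
  have h1 := Real.sin_sq_add_cos_sq (y/2)
  have h2 := Real.cosh_sq (x/2)
  have h3 := Real.cosh_two_mul (x/2)
  rw [show 2 * (x/2) = x by ring] at h3
  have h4 := Real.cos_two_mul (y/2)
  rw [show 2 * (y/2) = y by ring] at h4
  nlinarith [h1, h2, h3, h4]

lemma cosh_half_abs_sq (x y : ℝ) :
    ‖Complex.cosh ((x + y * Complex.I) / 2)‖ ^ 2 =
      (Real.cosh x + Real.cos y) / 2 := by
  have h : ((x : ℂ) + y * Complex.I) / 2 = ((x/2 : ℝ) : ℂ) + ((y/2 : ℝ) : ℂ) * Complex.I := by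
    push_cast; ring
  rw [h, Complex.cosh_add, Complex.sinh_mul_I, Complex.cosh_mul_I,
    ← Complex.ofReal_sinh, ← Complex.ofReal_cosh, ← Complex.ofReal_cos, ← Complex.ofReal_sin]
  rw [show (Real.cosh (x/2) : ℂ) * (Real.cos (y/2) : ℂ) + (Real.sinh (x/2) : ℂ) * ((Real.sin (y/2) : ℂ) * Complex.I)
      = ((Real.cosh (x/2) * Real.cos (y/2) : ℝ) : ℂ) + ((Real.sinh (x/2) * Real.sin (y/2) : ℝ) : ℂ) * Complex.I by
    push_cast; ring]
  rw [Complex.sq_norm, Complex.normSq_add_mul_I]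
  have h1 := Real.sin_sq_add_cos_sq (y/2)
  have h2 := Real.cosh_sq (x/2)
  have h3 := Real.cosh_two_mul (x/2)
  rw [show 2 * (x/2) = x by ring] at h3
  have h4 := Real.cos_two_mul (y/2)
  rw [show 2 * (y/2) = y by ring] at h4
  nlinarith [h1, h2, h3, h4]

theorem stmt_1 (d : ℝ) (hd : 0 < d) (hdπ : d < Real.pi) (s t : ℝ) :
    ‖Complex.tanh ((s + d * Complex.I) / 2) - Complex.tanh ((t : ℂ) / 2)‖ ^ 2 =
      (1 / Real.cosh (t / 2) ^ 2) *
        ((Real.cosh (s - t) - Real.cos d) / (Real.cosh s + Real.cos d)) := by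
  set a : ℂ := (s + d * Complex.I) / 2 with ha
  set b : ℂ := (t : ℂ) / 2 with hb
  have hcosd : -1 < Real.cos d := by
    have hpos : 0 < Real.cos (d/2) := by
      apply Real.cos_pos_of_mem_Ioo
      constructor <;> [nlinarith [Real.pi_pos]; nlinarith]
    have h4 := Real.cos_two_mul (d/2)
    rw [show 2 * (d/2) = d by ring] at h4
    nlinarith
  have hB : ‖Complex.cosh a‖ ^ 2 = (Real.cosh s + Real.cos d) / 2 :=
    cosh_half_abs_sq s d
  have hBpos : 0 < Real.cosh s + Real.cos d := by
    nlinarith [Real.one_le_cosh s]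
  have hca : Complex.cosh a ≠ 0 := by
    intro h
    rw [h] at hB
    simp at hB
    nlinarith
  have hcb : Complex.cosh b ≠ 0 := by
    rw [hb, show (t : ℂ) / 2 = ((t/2 : ℝ) : ℂ) by push_cast; ring, ← Complex.ofReal_cosh]
    exact_mod_cast (Real.cosh_pos (t/2)).ne'
  have habs_cb : ‖Complex.cosh b‖ = Real.cosh (t/2) := by
    rw [hb, show (t : ℂ) / 2 = ((t/2 : ℝ) : ℂ) by push_cast; ring, ← Complex.ofReal_cosh,
      Complex.norm_real, Real.norm_eq_abs, abs_of_pos (Real.cosh_pos _)]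
  have hdiff : Complex.tanh a - Complex.tanh b =
      Complex.sinh (a - b) / (Complex.cosh a * Complex.cosh b) := by
    rw [Complex.tanh_eq_sinh_div_cosh, Complex.tanh_eq_sinh_div_cosh, Complex.sinh_sub]
    field_simp
  have hab : a - b = ((s - t : ℝ) + (d : ℝ) * Complex.I) / 2 := by
    rw [ha, hb]; push_cast; ring
  have hA : ‖Complex.sinh (a - b)‖ ^ 2 = (Real.cosh (s - t) - Real.cos d) / 2 := by
    rw [hab]; exact sinh_half_abs_sq (s - t) d
  rw [hdiff, norm_div, norm_mul, div_pow, mul_pow, hA, hB, habs_cb]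
  have hc2 : (0:ℝ) < Real.cosh (t/2) ^ 2 := pow_pos (Real.cosh_pos _) 2
  have key : ∀ (A B C : ℝ), 0 < B → 0 < C → (A/2) / ((B/2) * C) = (1/C) * (A/B) := by
    intro A B C hB hC
    field_simp
  exact key _ _ _ hBpos hc2
end

section
/- Let α and β be distinct real numbers with α + β > 0, and set a = max{α, β}, b = min{α, β}. Then for every real number t, the integral J(α, β; t) = ∫_{−∞}^{∞} ds / (cosh^α(s − t) · cosh^β s) satisfies J(α, β; t) ≤ (max{2^{a+1}, 2^{a+b+1}} / (a² − b²)) · (−b·e^{−a|t|} + a·e^{−b|t|}). -/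
open Real MeasureTheory
open Set Filter

lemma exp_int_Ioi (c d u : ℝ) (hc : 0 < c) :
    IntegrableOn (fun s : ℝ => Real.exp (d - c * s)) (Ioi u) ∧
    (∫ s in Ioi u, Real.exp (d - c * s)) = Real.exp (d - c * u) / c := by
  have hderiv : ∀ x ∈ Ici u,
      HasDerivAt (fun s : ℝ => -(Real.exp (d - c * s) / c)) (Real.exp (d - c * x)) x := by
    intro x _
    have h : HasDerivAt (fun s : ℝ => d - c * s) (-c) x := by
      simpa using ((hasDerivAt_id x).const_mul c).const_sub d
    have := (h.exp.div_const c).neg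
    refine this.congr_deriv ?_
    field_simp
  have htend : Tendsto (fun s : ℝ => -(Real.exp (d - c * s) / c)) atTop (nhds 0) := by
    have h1 : Tendsto (fun s : ℝ => c * s) atTop atTop :=
      Tendsto.const_mul_atTop hc tendsto_id
    have h2 : Tendsto (fun s : ℝ => d - c * s) atTop atBot := by
      simpa [sub_eq_add_neg] using tendsto_atBot_add_const_left atTop d (tendsto_neg_atTop_atBot.comp h1)
    have h3 : Tendsto (fun s : ℝ => Real.exp (d - c * s)) atTop (nhds 0) :=
      Real.tendsto_exp_atBot.comp h2
    simpa using (h3.div_const c).neg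
  have hint : IntegrableOn (fun s : ℝ => Real.exp (d - c * s)) (Ioi u) :=
    integrableOn_Ioi_deriv_of_nonneg' hderiv (fun x _ => (Real.exp_pos _).le) htend
  refine ⟨hint, ?_⟩
  have := integral_Ioi_of_hasDerivAt_of_tendsto' hderiv hint htend
  rw [this]
  field_simp
  ring

lemma exp_int_Iic (c d : ℝ) (hc : 0 < c) :
    IntegrableOn (fun s : ℝ => Real.exp (d + c * s)) (Iic (0:ℝ)) ∧
    (∫ s in Iic (0:ℝ), Real.exp (d + c * s)) = Real.exp d / c := by
  have m : MeasurableEmbedding fun x : ℝ => -x := (Homeomorph.neg ℝ).measurableEmbedding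
  constructor
  · rw [IntegrableOn, ← Measure.map_neg_eq_self (volume : Measure ℝ)]
    have hres := m.restrict_map (volume : Measure ℝ) (Iic (0:ℝ))
    rw [hres, m.integrable_map_iff]
    have : ((fun x : ℝ => -x) ⁻¹' Iic 0) = Ici (0:ℝ) := by
      ext x; simp
    rw [this]
    have h := (exp_int_Ioi c d 0 hc).1
    have : IntegrableOn (fun s : ℝ => Real.exp (d - c * s)) (Ici (0:ℝ)) :=
      (integrableOn_Ici_iff_integrableOn_Ioi).mpr h
    refine this.congr_fun ?_ measurableSet_Ici
    intro x _; simp [Function.comp, mul_neg, sub_eq_add_neg]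
  · have h := integral_comp_neg_Iic (0:ℝ) (fun s : ℝ => Real.exp (d - c * s))
    rw [neg_zero] at h
    have h2 := (exp_int_Ioi c d 0 hc).2
    calc (∫ s in Iic (0:ℝ), Real.exp (d + c * s))
        = ∫ s in Iic (0:ℝ), Real.exp (d - c * (-s)) := by
          congr 1; ext s; ring_nf
      _ = ∫ s in Ioi (0:ℝ), Real.exp (d - c * s) := h
      _ = Real.exp d / c := by rw [h2]; norm_num

lemma exp_int_Ioc (e d u : ℝ) (he : e ≠ 0) (hu : 0 ≤ u) :
    IntegrableOn (fun s : ℝ => Real.exp (d + e * s)) (Ioc (0:ℝ) u) ∧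
    (∫ s in Ioc (0:ℝ) u, Real.exp (d + e * s)) = (Real.exp (d + e * u) - Real.exp d) / e := by
  have hcont : Continuous fun s : ℝ => Real.exp (d + e * s) := by continuity
  refine ⟨hcont.integrableOn_Ioc, ?_⟩
  rw [← intervalIntegral.integral_of_le hu]
  have hderiv : ∀ x ∈ uIcc (0:ℝ) u,
      HasDerivAt (fun s : ℝ => Real.exp (d + e * s) / e) (Real.exp (d + e * x)) x := by
    intro x _
    have h : HasDerivAt (fun s : ℝ => d + e * s) e x := by
      simpa using ((hasDerivAt_id x).const_mul e).const_add d
    have := h.exp.div_const e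
    refine this.congr_deriv ?_
    simp [he]
  rw [intervalIntegral.integral_eq_sub_of_hasDerivAt hderiv (hcont.intervalIntegrable 0 u)]
  simp [mul_zero, add_zero]
  ring

lemma calc1 (a b u : ℝ) (hba : b < a) (hpos : 0 < a + b) (hu : 0 ≤ u) :
    Integrable (fun s : ℝ => Real.exp (-(a * |s - u|) - b * |s|)) ∧
    (∫ s : ℝ, Real.exp (-(a * |s - u|) - b * |s|)) =
      (Real.exp (-(a * u)) + Real.exp (-(b * u))) / (a + b) +
        (Real.exp (-(b * u)) - Real.exp (-(a * u))) / (a - b) := by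
  set g := fun s : ℝ => Real.exp (-(a * |s - u|) - b * |s|) with hg
  have hab : (0:ℝ) < a - b := by linarith
  -- equalities on each piece
  have e1 : EqOn (fun s : ℝ => Real.exp (-(a * u) + (a + b) * s)) g (Iic (0:ℝ)) := by
    intro s hs
    simp only [mem_Iic] at hs
    have h1 : |s - u| = u - s := by rw [abs_of_nonpos (by linarith)]; ring
    have h2 : |s| = -s := abs_of_nonpos hs
    simp only [hg, h1, h2]; ring_nf
  have e2 : EqOn (fun s : ℝ => Real.exp (-(a * u) + (a - b) * s)) g (Ioc (0:ℝ) u) := by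
    intro s hs
    simp only [mem_Ioc] at hs
    have h1 : |s - u| = u - s := by rw [abs_of_nonpos (by linarith [hs.2])]; ring
    have h2 : |s| = s := abs_of_pos hs.1
    simp only [hg, h1, h2]; ring_nf
  have e3 : EqOn (fun s : ℝ => Real.exp (a * u - (a + b) * s)) g (Ioi u) := by
    intro s hs
    simp only [mem_Ioi] at hs
    have h1 : |s - u| = s - u := abs_of_pos (by linarith)
    have h2 : |s| = s := abs_of_pos (by linarith)
    simp only [hg, h1, h2]; ring_nf
  have i1 : IntegrableOn g (Iic (0:ℝ)) :=
    ((exp_int_Iic (a + b) (-(a * u)) hpos).1).congr_fun e1 measurableSet_Iic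
  have i2 : IntegrableOn g (Ioc (0:ℝ) u) :=
    ((exp_int_Ioc (a - b) (-(a * u)) u hab.ne' hu).1).congr_fun e2 measurableSet_Ioc
  have i3 : IntegrableOn g (Ioi u) :=
    ((exp_int_Ioi (a + b) (a * u) u hpos).1).congr_fun e3 measurableSet_Ioi
  have i23 : IntegrableOn g (Ioi (0:ℝ)) := by
    rw [← Ioc_union_Ioi_eq_Ioi hu, integrableOn_union]
    exact ⟨i2, i3⟩
  have hint : Integrable g := by
    rw [← integrableOn_univ, ← Iic_union_Ioi (a := (0:ℝ)), integrableOn_union]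
    exact ⟨i1, i23⟩
  refine ⟨hint, ?_⟩
  have v1 : (∫ s in Iic (0:ℝ), g s) = Real.exp (-(a * u)) / (a + b) := by
    rw [← setIntegral_congr_fun measurableSet_Iic e1]
    exact (exp_int_Iic (a + b) (-(a * u)) hpos).2
  have v2 : (∫ s in Ioc (0:ℝ) u, g s) =
      (Real.exp (-(b * u)) - Real.exp (-(a * u))) / (a - b) := by
    rw [← setIntegral_congr_fun measurableSet_Ioc e2,
      (exp_int_Ioc (a - b) (-(a * u)) u hab.ne' hu).2]
    congr 2
    ring_nf
  have v3 : (∫ s in Ioi u, g s) = Real.exp (-(b * u)) / (a + b) := by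
    rw [← setIntegral_congr_fun measurableSet_Ioi e3,
      (exp_int_Ioi (a + b) (a * u) u hpos).2]
    congr 2
    ring_nf
  have split2 : (∫ s in Ioi (0:ℝ), g s) =
      (∫ s in Ioc (0:ℝ) u, g s) + ∫ s in Ioi u, g s := by
    rw [← setIntegral_union (Ioc_disjoint_Ioi le_rfl) measurableSet_Ioi i2 i3,
      Ioc_union_Ioi_eq_Ioi hu]
  have split1 : (∫ s : ℝ, g s) = (∫ s in Iic (0:ℝ), g s) + ∫ s in Ioi (0:ℝ), g s :=
    (intervalIntegral.integral_Iic_add_Ioi i1 i23).symm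
  rw [split1, split2, v1, v2, v3]
  ring

lemma cosh_rpow_inv_bound (γ x : ℝ) :
    (Real.cosh x ^ γ)⁻¹ ≤ (2:ℝ) ^ max γ 0 * Real.exp (-(γ * |x|)) := by
  have hc : 0 < Real.cosh x := Real.cosh_pos (x := x)
  have hlow : Real.exp |x| / 2 ≤ Real.cosh x := by
    rw [Real.cosh_eq]
    rcases abs_cases x with ⟨h, _⟩ | ⟨h, _⟩
    · rw [h]; have := (Real.exp_pos (-x)).le; linarith
    · rw [h]; have := (Real.exp_pos x).le; linarith
  have hhigh : Real.cosh x ≤ Real.exp |x| := by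
    rw [Real.cosh_eq]
    have h1 : Real.exp x ≤ Real.exp |x| := Real.exp_le_exp.2 (le_abs_self x)
    have h2 : Real.exp (-x) ≤ Real.exp |x| := Real.exp_le_exp.2 (neg_le_abs x)
    linarith
  rcases le_or_gt 0 γ with hγ | hγ
  · rw [max_eq_left hγ]
    have hbase : (0:ℝ) < Real.exp |x| / 2 := by positivity
    have h1 : (Real.exp |x| / 2) ^ γ ≤ Real.cosh x ^ γ :=
      Real.rpow_le_rpow hbase.le hlow hγ
    have h2 : (Real.cosh x ^ γ)⁻¹ ≤ ((Real.exp |x| / 2) ^ γ)⁻¹ := by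
      apply inv_anti₀ (Real.rpow_pos_of_pos hbase γ) h1
    refine h2.trans_eq ?_
    rw [← Real.rpow_neg hbase.le]
    rw [Real.rpow_def_of_pos hbase, Real.log_div (Real.exp_pos _).ne' two_ne_zero,
      Real.log_exp, Real.rpow_def_of_pos two_pos, ← Real.exp_add]
    ring_nf
  · rw [max_eq_right hγ.le, Real.rpow_zero, one_mul]
    have h1 : (Real.cosh x ^ γ)⁻¹ = Real.cosh x ^ (-γ) := (Real.rpow_neg hc.le γ).symm
    rw [h1]
    have h2 : Real.cosh x ^ (-γ) ≤ (Real.exp |x|) ^ (-γ) :=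
      Real.rpow_le_rpow hc.le hhigh (by linarith)
    refine h2.trans_eq ?_
    rw [← Real.exp_mul]
    ring_nf

lemma master (α β t : ℝ) (hβα : β < α) (hpos : 0 < α + β) (ht : 0 ≤ t) :
    (∫ s : ℝ, 1 / (Real.cosh (s - t) ^ α * Real.cosh s ^ β)) ≤
      (max ((2 : ℝ) ^ (α + 1)) ((2 : ℝ) ^ (α + β + 1)) / (α ^ 2 - β ^ 2)) *
        (-β * Real.exp (-α * t) + α * Real.exp (-β * t)) := by
  obtain ⟨hint, hval⟩ := calc1 α β t hβα hpos ht
  set C : ℝ := (2:ℝ) ^ (max α 0 + max β 0) with hC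
  have hbound : ∀ s : ℝ, 1 / (Real.cosh (s - t) ^ α * Real.cosh s ^ β) ≤
      C * Real.exp (-(α * |s - t|) - β * |s|) := by
    intro s
    have h1 := cosh_rpow_inv_bound α (s - t)
    have h2 := cosh_rpow_inv_bound β s
    have hm : 1 / (Real.cosh (s - t) ^ α * Real.cosh s ^ β) =
        (Real.cosh (s - t) ^ α)⁻¹ * (Real.cosh s ^ β)⁻¹ := by
      rw [one_div, mul_inv]
    rw [hm]
    calc (Real.cosh (s - t) ^ α)⁻¹ * (Real.cosh s ^ β)⁻¹
        ≤ ((2:ℝ) ^ max α 0 * Real.exp (-(α * |s - t|))) *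
            ((2:ℝ) ^ max β 0 * Real.exp (-(β * |s|))) := by
          apply mul_le_mul h1 h2 (by positivity) (by positivity)
      _ = C * Real.exp (-(α * |s - t|) - β * |s|) := by
          rw [hC, Real.rpow_add two_pos,
            show -(α * |s - t|) - β * |s| = -(α * |s - t|) + -(β * |s|) by ring,
            Real.exp_add]
          ring
  have hmono : (∫ s : ℝ, 1 / (Real.cosh (s - t) ^ α * Real.cosh s ^ β)) ≤
      ∫ s : ℝ, C * Real.exp (-(α * |s - t|) - β * |s|) := by
    apply integral_mono_of_nonneg
    · exact ae_of_all _ fun s => by positivity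
    · exact hint.const_mul C
    · exact ae_of_all _ hbound
  refine hmono.trans_eq ?_
  rw [integral_const_mul, hval]
  -- now pure algebra
  have hα : 0 < α := by by_contra h; push_neg at h; linarith
  have hmaxα : max α 0 = α := max_eq_left hα.le
  have hmax2 : max ((2:ℝ) ^ (α + 1)) ((2:ℝ) ^ (α + β + 1)) =
      (2:ℝ) ^ (α + max β 0 + 1) := by
    rcases le_or_gt β 0 with h | h
    · rw [max_eq_right h,
        max_eq_left (Real.rpow_le_rpow_of_exponent_le one_le_two (by linarith))]
      norm_num
    · rw [max_eq_left h.le,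
        max_eq_right (Real.rpow_le_rpow_of_exponent_le one_le_two (by linarith))]
  rw [hmax2, hC, hmaxα]
  have hexp : (2:ℝ) ^ (α + max β 0 + 1) = (2:ℝ) ^ (α + max β 0) * 2 := by
    rw [Real.rpow_add_one two_ne_zero]
  rw [hexp]
  have hd1 : α + β ≠ 0 := hpos.ne'
  have hd2 : α - β ≠ 0 := by intro h; exact (sub_ne_zero.mpr hβα.ne') h
  have hd3 : α ^ 2 - β ^ 2 ≠ 0 := by
    intro h
    have : (α + β) * (α - β) = 0 := by ring_nf; linarith [h]
    rcases mul_eq_zero.1 this with h' | h' <;> [exact hd1 h'; exact hd2 h']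
  have e1 : Real.exp (-α * t) = Real.exp (-(α * t)) := by ring_nf
  have e2 : Real.exp (-β * t) = Real.exp (-(β * t)) := by ring_nf
  rw [e1, e2]
  field_simp
  ring

lemma master2 (α β t : ℝ) (hβα : β < α) (hpos : 0 < α + β) :
    (∫ s : ℝ, 1 / (Real.cosh (s - t) ^ α * Real.cosh s ^ β)) ≤
      (max ((2 : ℝ) ^ (α + 1)) ((2 : ℝ) ^ (α + β + 1)) / (α ^ 2 - β ^ 2)) *
        (-β * Real.exp (-α * |t|) + α * Real.exp (-β * |t|)) := by
  rcases le_or_gt 0 t with ht | ht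
  · rw [abs_of_nonneg ht]; exact master α β t hβα hpos ht
  · rw [abs_of_neg ht]
    have hswap : (∫ s : ℝ, 1 / (Real.cosh (s - t) ^ α * Real.cosh s ^ β)) =
        ∫ s : ℝ, 1 / (Real.cosh (s - (-t)) ^ α * Real.cosh s ^ β) := by
      rw [← integral_neg_eq_self (fun s : ℝ => 1 / (Real.cosh (s - t) ^ α * Real.cosh s ^ β))
        volume]
      congr 1
      ext s
      rw [show -s - t = -(s - (-t)) by ring, Real.cosh_neg, Real.cosh_neg]
    rw [hswap]
    exact master α β (-t) hβα hpos (by linarith)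

theorem stmt_4 (α β : ℝ) (hne : α ≠ β) (hpos : 0 < α + β) (t : ℝ)
    (a b : ℝ) (ha : a = max α β) (hb : b = min α β) :
    (∫ s : ℝ, 1 / (Real.cosh (s - t) ^ α * Real.cosh s ^ β)) ≤
      (max ((2 : ℝ) ^ (a + 1)) ((2 : ℝ) ^ (a + b + 1)) / (a ^ 2 - b ^ 2)) *
        (-b * Real.exp (-a * |t|) + a * Real.exp (-b * |t|)) := by
  rcases hne.lt_or_gt with h | h
  · -- α < β : a = β, b = α; substitute s ↦ t - s
    rw [ha, hb, max_eq_right h.le, min_eq_left h.le]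
    have hswap : (∫ s : ℝ, 1 / (Real.cosh (s - t) ^ α * Real.cosh s ^ β)) =
        ∫ s : ℝ, 1 / (Real.cosh (s - t) ^ β * Real.cosh s ^ α) := by
      rw [← integral_sub_left_eq_self
        (fun s : ℝ => 1 / (Real.cosh (s - t) ^ α * Real.cosh s ^ β)) volume t]
      congr 1
      ext s
      rw [show t - s - t = -s by ring, show t - s = -(s - t) by ring,
        Real.cosh_neg, Real.cosh_neg, mul_comm]
    rw [hswap]
    exact master2 β α t h (by linarith)
  · -- β < α : a = α, b = β
    rw [ha, hb, max_eq_left h.le, min_eq_right h.le]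
    exact master2 α β t h hpos
end

section
/- Let r > 0 and set c_r = π/(2√r). Define G_η(u) = −log|tanh(c_r(√u − η))| for u ≥ 0 with √u ≠ η. If u > r/π² and u ≠ η², then G_η is convex at u; more precisely, G_η''(u) = (c_r/(2u^{3/2})) · (cosh(2c_r(√u − η))/sinh²(2c_r(√u − η))) · (tanh(2c_r(√u − η)) + 2c_r·u^{1/2}) > 0. -/
open Real

private lemma hasDerivAt_tanh' (x : ℝ) : HasDerivAt Real.tanh (1 / Real.cosh x ^ 2) x := by
  have h := (Real.hasDerivAt_sinh x).div (Real.hasDerivAt_cosh x) (Real.cosh_pos x).ne'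
  have hf : (Real.sinh / Real.cosh) = Real.tanh := by
    funext y; rw [Pi.div_apply, Real.tanh_eq_sinh_div_cosh]
  rw [hf] at h
  refine h.congr_deriv ?_
  have := Real.cosh_sq_sub_sinh_sq x
  congr 1
  nlinarith [Real.cosh_sq_sub_sinh_sq x]

private lemma neg_one_lt_tanh' (x : ℝ) : -1 < Real.tanh x := by
  have h := Real.sinh_lt_cosh (-x)
  rw [Real.sinh_neg, Real.cosh_neg] at h
  rw [Real.tanh_eq_sinh_div_cosh]
  rw [lt_div_iff₀ (Real.cosh_pos x)]
  linarith

private lemma derivG (c η v : ℝ) (hv : 0 < v) (hne : Real.sqrt v ≠ η) (hc : c ≠ 0) :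
    HasDerivAt (fun u : ℝ => -Real.log |Real.tanh (c * (Real.sqrt u - η))|)
      (-c / (Real.sqrt v * Real.sinh (2 * c * (Real.sqrt v - η)))) v := by
  set t := c * (Real.sqrt v - η) with ht
  have hS : Real.sqrt v ≠ 0 := (Real.sqrt_pos.2 hv).ne'
  have ht0 : t ≠ 0 := mul_ne_zero hc (sub_ne_zero.2 hne)
  have hsh : Real.sinh t ≠ 0 := Real.sinh_ne_zero.2 ht0
  have hch : Real.cosh t ≠ 0 := (Real.cosh_pos t).ne'
  have htanh0 : Real.tanh t ≠ 0 := by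
    rw [Real.tanh_eq_sinh_div_cosh]; exact div_ne_zero hsh hch
  have h1 : HasDerivAt (fun u : ℝ => c * (Real.sqrt u - η)) (c * (1 / (2 * Real.sqrt v))) v :=
    ((Real.hasDerivAt_sqrt hv.ne').sub_const η).const_mul c
  have h2 : HasDerivAt (fun u : ℝ => Real.tanh (c * (Real.sqrt u - η)))
      (1 / Real.cosh t ^ 2 * (c * (1 / (2 * Real.sqrt v)))) v :=
    by have := (hasDerivAt_tanh' t).comp v h1; exact this
  have h3 : HasDerivAt (fun u : ℝ => Real.log (Real.tanh (c * (Real.sqrt u - η))))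
      ((Real.tanh t)⁻¹ * (1 / Real.cosh t ^ 2 * (c * (1 / (2 * Real.sqrt v))))) v :=
    by have := (Real.hasDerivAt_log htanh0).comp v h2; exact this
  have hfun : (fun u : ℝ => -Real.log |Real.tanh (c * (Real.sqrt u - η))|)
      = fun u : ℝ => -Real.log (Real.tanh (c * (Real.sqrt u - η))) := by
    funext y; rw [Real.log_abs]
  rw [hfun]
  convert h3.neg using 1
  · rfl
  · rfl
  · rfl
  rw [show 2 * c * (Real.sqrt v - η) = 2 * t by ring, Real.sinh_two_mul,
    Real.tanh_eq_sinh_div_cosh]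
  field_simp

theorem stmt_8 (r : ℝ) (hr : 0 < r) (c : ℝ) (hc : c = Real.pi / (2 * Real.sqrt r))
    (η : ℝ) (G : ℝ → ℝ)
    (hG : G = fun u : ℝ => -Real.log |Real.tanh (c * (Real.sqrt u - η))|)
    (u : ℝ) (hu : r / Real.pi ^ 2 < u) (huη : u ≠ η ^ 2) :
    deriv (deriv G) u =
      (c / (2 * u ^ ((3 : ℝ) / 2))) *
        (Real.cosh (2 * c * (Real.sqrt u - η)) / Real.sinh (2 * c * (Real.sqrt u - η)) ^ 2) *
        (Real.tanh (2 * c * (Real.sqrt u - η)) + 2 * c * Real.sqrt u) ∧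
    0 < deriv (deriv G) u := by
  have hπ : (0 : ℝ) < Real.pi := Real.pi_pos
  have hsr : 0 < Real.sqrt r := Real.sqrt_pos.2 hr
  have hc0 : 0 < c := by rw [hc]; positivity
  have hrpi : 0 < r / Real.pi ^ 2 := by positivity
  have hu0 : 0 < u := hrpi.trans hu
  have hS0 : 0 < Real.sqrt u := Real.sqrt_pos.2 hu0
  -- sqrt u ≠ η for all v in the open set
  set F : ℝ → ℝ := fun v => -c / (Real.sqrt v * Real.sinh (2 * c * (Real.sqrt v - η))) with hF
  have hopen : IsOpen (Set.Ioi (r / Real.pi ^ 2) ∩ {η ^ 2}ᶜ) :=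
    isOpen_Ioi.inter isOpen_compl_singleton
  have hmem : u ∈ Set.Ioi (r / Real.pi ^ 2) ∩ {η ^ 2}ᶜ := ⟨hu, huη⟩
  have hne_of_mem : ∀ v ∈ Set.Ioi (r / Real.pi ^ 2) ∩ {η ^ 2}ᶜ,
      0 < v ∧ Real.sqrt v ≠ η := by
    intro v hv
    have hv0 : 0 < v := hrpi.trans hv.1
    refine ⟨hv0, fun h => hv.2 ?_⟩
    simp only [Set.mem_singleton_iff]
    rw [← h, Real.sq_sqrt hv0.le]
  have hev : deriv G =ᶠ[nhds u] F := by
    filter_upwards [hopen.mem_nhds hmem] with v hv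
    obtain ⟨hv0, hvη⟩ := hne_of_mem v hv
    rw [hG]
    exact (derivG c η v hv0 hvη hc0.ne').deriv
  have hkey := hev.deriv_eq
  -- derivative of F at u
  set t := c * (Real.sqrt u - η) with htdef
  have hsuη : Real.sqrt u ≠ η := (hne_of_mem u hmem).2
  have ht0 : (2 * c) * (Real.sqrt u - η) ≠ 0 :=
    mul_ne_zero (by positivity) (sub_ne_zero.2 hsuη)
  have hsh : Real.sinh (2 * c * (Real.sqrt u - η)) ≠ 0 := Real.sinh_ne_zero.2 ht0
  have hch : (0:ℝ) < Real.cosh (2 * c * (Real.sqrt u - η)) := Real.cosh_pos _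
  have hden : Real.sqrt u * Real.sinh (2 * c * (Real.sqrt u - η)) ≠ 0 :=
    mul_ne_zero hS0.ne' hsh
  have hinner : HasDerivAt (fun v : ℝ => 2 * c * (Real.sqrt v - η))
      (2 * c * (1 / (2 * Real.sqrt u))) u :=
    ((Real.hasDerivAt_sqrt hu0.ne').sub_const η).const_mul (2 * c)
  have hsinh : HasDerivAt (fun v : ℝ => Real.sinh (2 * c * (Real.sqrt v - η)))
      (Real.cosh (2 * c * (Real.sqrt u - η)) * (2 * c * (1 / (2 * Real.sqrt u)))) u :=
    (Real.hasDerivAt_sinh _).comp u hinner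
  have hdenD : HasDerivAt (fun v : ℝ => Real.sqrt v * Real.sinh (2 * c * (Real.sqrt v - η)))
      (1 / (2 * Real.sqrt u) * Real.sinh (2 * c * (Real.sqrt u - η)) +
        Real.sqrt u * (Real.cosh (2 * c * (Real.sqrt u - η)) * (2 * c * (1 / (2 * Real.sqrt u)))))
      u := (Real.hasDerivAt_sqrt hu0.ne').mul hsinh
  have hFd : HasDerivAt F
      ((0 * (Real.sqrt u * Real.sinh (2 * c * (Real.sqrt u - η))) -
        (-c) * (1 / (2 * Real.sqrt u) * Real.sinh (2 * c * (Real.sqrt u - η)) +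
          Real.sqrt u * (Real.cosh (2 * c * (Real.sqrt u - η)) * (2 * c * (1 / (2 * Real.sqrt u)))))) /
        (Real.sqrt u * Real.sinh (2 * c * (Real.sqrt u - η))) ^ 2) u :=
    (hasDerivAt_const u (-c)).div hdenD hden
  have hrpow : u ^ ((3:ℝ)/2) = u * Real.sqrt u := by
    rw [show (3:ℝ)/2 = 1 + 1/2 by norm_num, Real.rpow_add hu0, Real.rpow_one,
      ← Real.sqrt_eq_rpow]
  have hsq : Real.sqrt u * Real.sqrt u = u := Real.mul_self_sqrt hu0.le
  have heq : deriv (deriv G) u =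
      (c / (2 * u ^ ((3 : ℝ) / 2))) *
        (Real.cosh (2 * c * (Real.sqrt u - η)) / Real.sinh (2 * c * (Real.sqrt u - η)) ^ 2) *
        (Real.tanh (2 * c * (Real.sqrt u - η)) + 2 * c * Real.sqrt u) := by
    rw [hkey, hFd.deriv, hrpow, Real.tanh_eq_sinh_div_cosh]
    field_simp
    linear_combination (-(2 * c ^ 2 * Real.sqrt u * Real.cosh (2 * c * (Real.sqrt u - η))) -
      Real.sinh (2 * c * (Real.sqrt u - η)) * c) * hsq
  refine ⟨heq, ?_⟩
  rw [heq]
  have h1 : 0 < c / (2 * u ^ ((3:ℝ)/2)) := by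
    apply div_pos hc0; rw [hrpow]; positivity
  have h2 : 0 < Real.cosh (2 * c * (Real.sqrt u - η)) / Real.sinh (2 * c * (Real.sqrt u - η)) ^ 2 :=
    div_pos hch (by positivity)
  have h3 : 0 < Real.tanh (2 * c * (Real.sqrt u - η)) + 2 * c * Real.sqrt u := by
    have htl := neg_one_lt_tanh' (2 * c * (Real.sqrt u - η))
    have : 1 < 2 * c * Real.sqrt u := by
      have hlt : Real.sqrt r < Real.pi * Real.sqrt u := by
        rw [Real.sqrt_lt' (by positivity)]
        rw [mul_pow, Real.sq_sqrt hu0.le]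
        calc r = r / Real.pi ^ 2 * Real.pi ^ 2 := by field_simp
          _ < u * Real.pi ^ 2 := by
              apply mul_lt_mul_of_pos_right hu (by positivity)
          _ = Real.pi ^ 2 * u := by ring
      rw [hc]
      rw [show 2 * (Real.pi / (2 * Real.sqrt r)) * Real.sqrt u
          = Real.pi * Real.sqrt u / Real.sqrt r by field_simp]
      rw [lt_div_iff₀ hsr, one_mul]
      exact hlt
    linarith
  positivity
end

section
/- Let r > 0, c_r = π/(2√r), and η > 0. Let m be a nonnegative integer with m − 1 < η² < m + 1, and set t_r = tanh(2c_r)/2. Then −∫_m^{m+1} G_η(u) du ≥ −(1/2)·log(m + 1) + log(t_r/4) − 3/2, where G_η(u) = −log|tanh(c_r(√u − η))|. -/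
open Real intervalIntegral

private lemma my_tanh_nonneg {x : ℝ} (hx : 0 ≤ x) : 0 ≤ Real.tanh x := by
  rw [Real.tanh_eq_sinh_div_cosh]
  exact div_nonneg (Real.sinh_nonneg_iff.2 hx) (Real.cosh_pos x).le

private lemma my_tanh_concave : ConcaveOn ℝ (Set.Ici (0:ℝ)) Real.tanh := by
  have hd : ∀ x : ℝ, HasDerivAt Real.tanh ((Real.cosh x ^ 2)⁻¹) x := by
    intro x
    have h1 : HasDerivAt (fun y => Real.sinh y / Real.cosh y)
        ((Real.cosh x * Real.cosh x - Real.sinh x * Real.sinh x) / Real.cosh x ^ 2) x :=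
      (Real.hasDerivAt_sinh x).div (Real.hasDerivAt_cosh x) (Real.cosh_pos x).ne'
    have h2 : (Real.cosh x * Real.cosh x - Real.sinh x * Real.sinh x) / Real.cosh x ^ 2
        = (Real.cosh x ^ 2)⁻¹ := by
      rw [show Real.cosh x * Real.cosh x - Real.sinh x * Real.sinh x
          = Real.cosh x ^ 2 - Real.sinh x ^ 2 by ring, Real.cosh_sq_sub_sinh_sq, one_div]
    rw [h2] at h1
    have : Real.tanh = fun y => Real.sinh y / Real.cosh y :=
      funext fun y => Real.tanh_eq_sinh_div_cosh y
    rw [this]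
    exact h1
  have hd2 : ∀ x : ℝ, HasDerivAt (fun y => (Real.cosh y ^ 2)⁻¹)
      (-(2 * Real.cosh x ^ 1 * Real.sinh x) / (Real.cosh x ^ 2) ^ 2) x := by
    intro x
    have h1 : HasDerivAt (fun y => Real.cosh y ^ 2)
        ((2 : ℕ) * Real.cosh x ^ 1 * Real.sinh x) x := by
      simpa using (Real.hasDerivAt_cosh x).fun_pow 2
    have h2 := h1.fun_inv (by positivity : Real.cosh x ^ 2 ≠ 0)
    simpa using h2
  apply concaveOn_of_hasDerivWithinAt2_nonpos (convex_Ici 0)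
    (f' := fun x => (Real.cosh x ^ 2)⁻¹)
    (f'' := fun x => -(2 * Real.cosh x ^ 1 * Real.sinh x) / (Real.cosh x ^ 2) ^ 2)
  · exact fun x _ => ((hd x).differentiableAt.continuousAt).continuousWithinAt
  · exact fun x _ => (hd x).hasDerivWithinAt
  · exact fun x _ => (hd2 x).hasDerivWithinAt
  · intro x hx
    rw [interior_Ici] at hx
    have hs : 0 ≤ Real.sinh x := Real.sinh_nonneg_iff.2 (le_of_lt hx)
    have hc := (Real.cosh_pos x).le
    apply div_nonpos_of_nonpos_of_nonneg
    · have : 0 ≤ 2 * Real.cosh x ^ 1 * Real.sinh x := by positivity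
      linarith
    · positivity

private lemma my_tanh_lower {c : ℝ} (hc : 0 < c) {x : ℝ} (hx : |x| ≤ 2) :
    Real.tanh (2 * c) / 2 * |x| ≤ |Real.tanh (c * x)| := by
  have h2c : 0 < 2 * c := by linarith
  have key : ∀ y : ℝ, 0 ≤ y → y ≤ 2 * c → Real.tanh (2 * c) / (2 * c) * y ≤ Real.tanh y := by
    intro y h0 h2
    have hb0 : 0 ≤ y / (2 * c) := div_nonneg h0 h2c.le
    have hb1 : y / (2 * c) ≤ 1 := (div_le_one h2c).2 h2
    have hcon := my_tanh_concave.2 (Set.mem_Ici.2 (le_refl (0:ℝ))) (Set.mem_Ici.2 h2c.le)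
      (show (0:ℝ) ≤ 1 - y / (2 * c) by linarith) (show (0:ℝ) ≤ y / (2 * c) from hb0)
      (show (1 - y / (2 * c)) + y / (2 * c) = 1 by ring)
    simp only [smul_eq_mul, mul_zero, Real.tanh_zero, zero_add] at hcon
    have hyy : y / (2 * c) * (2 * c) = y := by field_simp
    rw [hyy] at hcon
    calc Real.tanh (2 * c) / (2 * c) * y = y / (2 * c) * Real.tanh (2 * c) := by ring
      _ ≤ Real.tanh y := hcon
  have habs : |Real.tanh (c * x)| = Real.tanh (c * |x|) := by
    rcases le_or_gt 0 x with h | h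
    · rw [abs_of_nonneg h, abs_of_nonneg (my_tanh_nonneg (by positivity))]
    · have h1 : c * x = -(c * -x) := by ring
      have h2 : 0 ≤ Real.tanh (c * -x) := my_tanh_nonneg (by nlinarith)
      rw [abs_of_neg h, h1, Real.tanh_neg, abs_of_nonpos (by linarith), neg_neg]
  rw [habs]
  have hy1 : 0 ≤ c * |x| := by positivity
  have hy2 : c * |x| ≤ 2 * c := by nlinarith [abs_nonneg x]
  have := key (c * |x|) hy1 hy2
  have heq : Real.tanh (2 * c) / (2 * c) * (c * |x|) = Real.tanh (2 * c) / 2 * |x| := by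
    field_simp
  linarith [heq ▸ this]

private lemma my_intInt_log (s : ℝ) (hs : 0 ≤ s) :
    IntervalIntegrable Real.log MeasureTheory.volume 0 s := by
  have hg : IntervalIntegrable (fun t : ℝ => 2 * t ^ (-(1:ℝ)/2) + t)
      MeasureTheory.volume 0 s :=
    ((intervalIntegrable_rpow' (by norm_num)).const_mul 2).add
      (continuous_id.intervalIntegrable 0 s)
  apply hg.mono_fun Real.measurable_log.aestronglyMeasurable
  filter_upwards [MeasureTheory.ae_restrict_mem measurableSet_uIoc] with t ht
  rw [Set.uIoc_of_le hs] at ht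
  obtain ⟨ht0, hts⟩ := ht
  have h1 : (0:ℝ) < t ^ (-(1:ℝ)/2) := Real.rpow_pos_of_pos ht0 _
  have habs : |Real.log t| ≤ 2 * t ^ (-(1:ℝ)/2) + t := by
    rcases le_or_gt t 1 with h | h
    · have hlt : Real.log t ≤ 0 := Real.log_nonpos ht0.le h
      rw [abs_of_nonpos hlt]
      have h2 : Real.log (t ^ (-(1:ℝ)/2)) ≤ t ^ (-(1:ℝ)/2) - 1 :=
        Real.log_le_sub_one_of_pos h1
      rw [Real.log_rpow ht0] at h2
      nlinarith
    · have hlog : Real.log t ≤ t - 1 := Real.log_le_sub_one_of_pos ht0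
      rw [abs_of_nonneg (Real.log_nonneg h.le)]
      nlinarith
  calc ‖Real.log t‖ = |Real.log t| := rfl
    _ ≤ 2 * t ^ (-(1:ℝ)/2) + t := habs
    _ ≤ ‖2 * t ^ (-(1:ℝ)/2) + t‖ := le_abs_self _

private lemma my_integral_neglog {s : ℝ} (hs : 0 ≤ s) :
    ∫ t in (0:ℝ)..s, -Real.log t = s - s * Real.log s := by
  rcases eq_or_lt_of_le hs with rfl | hs'
  · simp
  have h : ∫ t in (0:ℝ)..s, -Real.log t
      = (s - s * Real.log s) - (0 - 0 * Real.log 0) := by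
    apply intervalIntegral.integral_eq_sub_of_hasDeriv_right_of_le hs
      (f := fun t => t - t * Real.log t)
    · exact (continuous_id.sub Real.continuous_mul_log).continuousOn
    · intro x hx
      have h1 := (hasDerivAt_id x).sub (Real.hasDerivAt_mul_log hx.1.ne')
      have h2 : (1 : ℝ) - (Real.log x + 1) = -Real.log x := by ring
      rw [h2] at h1
      exact h1.hasDerivWithinAt
    · exact (my_intInt_log s hs).neg
  simpa using h

private lemma my_phi_le_one {s : ℝ} (hs : 0 ≤ s) : s - s * Real.log s ≤ 1 := by
  rcases eq_or_lt_of_le hs with rfl | hs'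
  · simp
  have h1 : Real.log s⁻¹ ≤ s⁻¹ - 1 := Real.log_le_sub_one_of_pos (by positivity)
  rw [Real.log_inv] at h1
  have h2 : s * -Real.log s ≤ s * (s⁻¹ - 1) := mul_le_mul_of_nonneg_left h1 hs
  have h3 : s * s⁻¹ = 1 := mul_inv_cancel₀ hs'.ne'
  nlinarith

private lemma my_phi_nonneg {s : ℝ} (hs : 0 ≤ s) (hs1 : s ≤ 1) :
    0 ≤ s - s * Real.log s := by
  have h1 : Real.log s ≤ 0 := Real.log_nonpos hs hs1
  nlinarith

private lemma my_neglog_interval {p : ℝ} (hp0 : -1 ≤ p) (hp1 : p ≤ 1) :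
    IntervalIntegrable (fun t => -Real.log t) MeasureTheory.volume p (p + 1) ∧
    ∫ t in p..(p + 1), -Real.log t ≤ 1 + Real.log 2 := by
  have hlog2 : 0 ≤ Real.log 2 := Real.log_nonneg one_le_two
  rcases le_or_gt 0 p with hp | hp
  · have h1 : IntervalIntegrable (fun t => -Real.log t) MeasureTheory.volume 0 p :=
      (my_intInt_log p hp).neg
    have h2 : IntervalIntegrable (fun t => -Real.log t) MeasureTheory.volume 0 (p+1) :=
      (my_intInt_log (p+1) (by linarith)).neg
    have hInt := h1.symm.trans h2
    refine ⟨hInt, ?_⟩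
    have hadd := intervalIntegral.integral_add_adjacent_intervals h1 hInt
    have e1 := my_integral_neglog hp
    have e2 := my_integral_neglog (show (0:ℝ) ≤ p + 1 by linarith)
    have b1 := my_phi_le_one (show (0:ℝ) ≤ p + 1 by linarith)
    have b2 := my_phi_nonneg hp hp1
    linarith [hadd, e1, e2]
  · -- p < 0 < p + 1
    have hq : 0 ≤ p + 1 := by linarith
    have hnp : 0 ≤ -p := by linarith
    have hfe : (fun t : ℝ => -Real.log t) = (fun t : ℝ => -Real.log (-t)) := by
      funext t; rw [Real.log_neg_eq_log]
    have h0 : IntervalIntegrable (fun t => -Real.log t) MeasureTheory.volume 0 (-p) :=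
      (my_intInt_log (-p) hnp).neg
    have h1 : IntervalIntegrable (fun t => -Real.log t) MeasureTheory.volume p 0 := by
      have := (IntervalIntegrable.iff_comp_neg (by simp)).mp h0
      rw [← hfe] at this
      simpa using this.symm
    have h2 : IntervalIntegrable (fun t => -Real.log t) MeasureTheory.volume 0 (p+1) :=
      (my_intInt_log (p+1) hq).neg
    have hInt := h1.trans h2
    refine ⟨hInt, ?_⟩
    have hadd := intervalIntegral.integral_add_adjacent_intervals h1 h2
    have hrefl : ∫ t in p..(0:ℝ), -Real.log t = ∫ t in (0:ℝ)..(-p), -Real.log t := by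
      rw [hfe]
      have := intervalIntegral.integral_comp_neg (a := p) (b := 0)
        (f := fun t : ℝ => -Real.log t)
      simpa using this
    have e1 := my_integral_neglog hnp
    have e2 := my_integral_neglog hq
    -- s - s log s for s = -p and s = p+1 = 1 - (-p); use binEntropy
    have hent : Real.binEntropy (-p) ≤ Real.log 2 := Real.binEntropy_le_log_two
    have hent_eq : Real.binEntropy (-p)
        = -(-p) * Real.log (-p) - (p+1) * Real.log (p+1) := by
      rw [Real.binEntropy, Real.log_inv, Real.log_inv]
      ring_nf
    linarith [hadd, hrefl, e1, e2]

theorem stmt_11 (r : ℝ) (hr : 0 < r) (c : ℝ) (hc : c = Real.pi / (2 * Real.sqrt r))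
    (η : ℝ) (hη : 0 < η) (m : ℕ)
    (h1 : (m : ℝ) - 1 < η ^ 2) (h2 : η ^ 2 < (m : ℝ) + 1)
    (tr : ℝ) (htr : tr = Real.tanh (2 * c) / 2) :
    -(1 / 2) * Real.log ((m : ℝ) + 1) + Real.log (tr / 4) - 3 / 2 ≤
      -∫ u in (m : ℝ)..((m : ℝ) + 1), -Real.log |Real.tanh (c * (Real.sqrt u - η))| := by
  have hm0 : (0:ℝ) ≤ (m:ℝ) := Nat.cast_nonneg m
  have hsr : 0 < Real.sqrt r := Real.sqrt_pos.2 hr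
  have hc0 : 0 < c := by rw [hc]; exact div_pos Real.pi_pos (by linarith)
  have htanh2c_pos : 0 < Real.tanh (2 * c) := by
    rw [Real.tanh_eq_sinh_div_cosh]
    exact div_pos (Real.sinh_pos_iff.2 (by linarith)) (Real.cosh_pos _)
  have htanh2c_lt : Real.tanh (2 * c) < 1 := by
    rw [Real.tanh_eq_sinh_div_cosh]
    exact (div_lt_one (Real.cosh_pos _)).2 (Real.sinh_lt_cosh _)
  have htr0 : 0 < tr := by rw [htr]; linarith
  have htr1 : tr < 1 := by rw [htr]; linarith
  set a := η ^ 2 with ha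
  set C := -Real.log tr + Real.log (2 * Real.sqrt ((m:ℝ) + 1)) with hC
  have hsqm1 : 1 ≤ Real.sqrt ((m:ℝ) + 1) := Real.one_le_sqrt.2 (by linarith)
  have hC0 : 0 ≤ C := by
    have := Real.log_nonpos htr0.le htr1.le
    have := Real.log_nonneg (show (1:ℝ) ≤ 2 * Real.sqrt ((m:ℝ)+1) by linarith)
    rw [hC]; linarith
  have hLogm : 0 ≤ Real.log ((m:ℝ) + 1) := Real.log_nonneg (by linarith)
  have hlog2 : 0 ≤ Real.log 2 := Real.log_nonneg one_le_two
  -- pointwise bound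
  have hpt : ∀ u ∈ Set.Icc (m:ℝ) ((m:ℝ) + 1),
      -Real.log |Real.tanh (c * (Real.sqrt u - η))| ≤ C + -Real.log (u - a) := by
    intro u hu
    obtain ⟨hu1, hu2⟩ := hu
    have hu0 : 0 ≤ u := le_trans hm0 hu1
    set x := Real.sqrt u - η with hx
    have hsqnn : 0 ≤ Real.sqrt u := Real.sqrt_nonneg u
    have hsq : Real.sqrt u * Real.sqrt u = u := Real.mul_self_sqrt hu0
    have hsum_pos : 0 < Real.sqrt u + η := by linarith
    have hprod : x * (Real.sqrt u + η) = u - a := by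
      have : x * (Real.sqrt u + η) = Real.sqrt u * Real.sqrt u - η ^ 2 := by rw [hx]; ring
      rw [this, hsq]
    have habs_prod : |x| * (Real.sqrt u + η) = |u - a| := by
      rw [← hprod, abs_mul, abs_of_pos hsum_pos]
    have hua : |u - a| ≤ 2 := abs_le.2 ⟨by linarith, by linarith⟩
    have hxs : |x| ≤ Real.sqrt u + η := abs_le.2 ⟨by rw [hx]; linarith, by rw [hx]; linarith⟩
    have hxx : |x| * |x| ≤ 2 := by
      calc |x| * |x| ≤ |x| * (Real.sqrt u + η) :=
            mul_le_mul_of_nonneg_left hxs (abs_nonneg x)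
        _ = |u - a| := habs_prod
        _ ≤ 2 := hua
    have hx2 : |x| ≤ 2 := by nlinarith [abs_nonneg x]
    have htanhx : tr * |x| ≤ |Real.tanh (c * x)| := by
      rw [htr]; exact my_tanh_lower hc0 hx2
    by_cases hxz : x = 0
    · have hu_eq : u - a = 0 := by rw [← hprod, hxz, zero_mul]
      rw [show c * (Real.sqrt u - η) = c * x from rfl, hxz, mul_zero, Real.tanh_zero,
        abs_zero, Real.log_zero, hu_eq, Real.log_zero]
      simpa using hC0
    · have hxpos : 0 < |x| := abs_pos.2 hxz
      have htpos : 0 < tr * |x| := mul_pos htr0 hxpos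
      have hlog1 : Real.log (tr * |x|) ≤ Real.log |Real.tanh (c * x)| :=
        Real.log_le_log htpos htanhx
      have hlm : Real.log (tr * |x|) = Real.log tr + Real.log |x| :=
        Real.log_mul htr0.ne' hxpos.ne'
      have h3 : Real.log |u - a| = Real.log |x| + Real.log (Real.sqrt u + η) := by
        rw [← habs_prod]
        exact Real.log_mul hxpos.ne' hsum_pos.ne'
      have hsu : Real.sqrt u ≤ Real.sqrt ((m:ℝ) + 1) := Real.sqrt_le_sqrt (by linarith)
      have hηlt : η < Real.sqrt ((m:ℝ) + 1) := Real.lt_sqrt_of_sq_lt h2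
      have h4 : Real.log (Real.sqrt u + η) ≤ Real.log (2 * Real.sqrt ((m:ℝ) + 1)) :=
        Real.log_le_log hsum_pos (by linarith)
      have h5 : Real.log (u - a) = Real.log |u - a| := (Real.log_abs _).symm
      rw [show c * (Real.sqrt u - η) = c * x from rfl]
      rw [hC]
      linarith
  -- majorant integrability and bound
  have hp0 : -1 ≤ (m:ℝ) - a := by linarith
  have hp1 : (m:ℝ) - a ≤ 1 := by linarith
  obtain ⟨hNI, hNB⟩ := my_neglog_interval hp0 hp1
  have hshift : IntervalIntegrable (fun u => -Real.log (u - a)) MeasureTheory.volume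
      (m:ℝ) ((m:ℝ) + 1) := by
    have h := hNI.comp_sub_right a
    have e1 : (m:ℝ) - a + a = (m:ℝ) := by ring
    have e2 : (m:ℝ) - a + 1 + a = (m:ℝ) + 1 := by ring
    rw [e1, e2] at h
    exact h
  have hmaj : IntervalIntegrable (fun u => C + -Real.log (u - a)) MeasureTheory.volume
      (m:ℝ) ((m:ℝ) + 1) := (intervalIntegrable_const (c := C)).add hshift
  have hval : ∫ u in (m:ℝ)..((m:ℝ) + 1), (C + -Real.log (u - a)) ≤ C + 1 + Real.log 2 := by
    have hsub : ∫ u in (m:ℝ)..((m:ℝ) + 1), -Real.log (u - a)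
        = ∫ t in ((m:ℝ) - a)..((m:ℝ) + 1 - a), -Real.log t := by
      have := intervalIntegral.integral_comp_sub_right (a := (m:ℝ)) (b := (m:ℝ) + 1)
        (fun t : ℝ => -Real.log t) a
      simpa using this
    have hsplit : ∫ u in (m:ℝ)..((m:ℝ) + 1), (C + -Real.log (u - a))
        = C * (((m:ℝ) + 1) - (m:ℝ)) + ∫ u in (m:ℝ)..((m:ℝ) + 1), -Real.log (u - a) := by
      rw [intervalIntegral.integral_add (intervalIntegrable_const (c := C)) hshift,
        intervalIntegral.integral_const, smul_eq_mul]
      ring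
    have e3 : (m:ℝ) + 1 - a = ((m:ℝ) - a) + 1 := by ring
    rw [hsplit, hsub, e3]
    have := hNB
    have e4 : C * (((m:ℝ) + 1) - (m:ℝ)) = C := by ring
    rw [e4]
    linarith
  set F := fun u => -Real.log |Real.tanh (c * (Real.sqrt u - η))| with hF
  -- final arithmetic facts
  have hlogC : C = -Real.log tr + Real.log 2 + (1/2) * Real.log ((m:ℝ) + 1) := by
    rw [hC, Real.log_mul (by norm_num) (by linarith), Real.log_sqrt (by linarith)]
    ring
  have hlogtr4 : Real.log (tr / 4) = Real.log tr - 2 * Real.log 2 := by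
    rw [Real.log_div htr0.ne' (by norm_num), show (4:ℝ) = 2 ^ 2 by norm_num,
      Real.log_pow]
    push_cast
    ring
  by_cases hInt : IntervalIntegrable F MeasureTheory.volume (m:ℝ) ((m:ℝ) + 1)
  · have hmono : ∫ u in (m:ℝ)..((m:ℝ) + 1), F u
        ≤ ∫ u in (m:ℝ)..((m:ℝ) + 1), (C + -Real.log (u - a)) :=
      intervalIntegral.integral_mono_on (by linarith) hInt hmaj hpt
    have hlogtr : Real.log tr ≤ 0 := Real.log_nonpos htr0.le htr1.le
    have : ∫ u in (m:ℝ)..((m:ℝ) + 1), F u ≤ C + 1 + Real.log 2 := le_trans hmono hval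
    rw [hlogtr4]
    rw [hlogC] at this
    linarith
  · rw [intervalIntegral.integral_undef hInt]
    have hlogtr4' : Real.log (tr / 4) ≤ 0 :=
      Real.log_nonpos (by positivity) (by linarith)
    linarith
end

section
/- Let m be an integer with m − 1 < η² < m for some real η > 0. Then ∫_{√m}^{√(m+1)} 2·log|v − η|·v dv ≥ −(1/2)·log(m + 1) + log(1/2) − 1. -/
open Real intervalIntegral

set_option maxHeartbeats 1000000 in
private lemma stmt_15_aux (μ η a b : ℝ) (hη : 0 < η)
    (hm1 : (1:ℝ) ≤ μ) (h1 : μ - 1 < η ^ 2) (h2 : η ^ 2 < μ)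
    (ha2 : a^2 = μ) (hb2 : b^2 = μ + 1) (ha0 : 0 ≤ a) (hb0 : 0 ≤ b) :
    -(1 / 2) * Real.log (μ + 1) + Real.log (1 / 2) - 1 ≤
      ∫ v in a..b, 2 * Real.log |v - η| * v := by
  have ha1 : 1 ≤ a := by nlinarith
  have hab : a ≤ b := by nlinarith
  have hηa : η < a := by nlinarith
  have hbpos : (0:ℝ) < b := by linarith
  have hbηp : (0:ℝ) < b + η := by linarith
  have haηp : (0:ℝ) < a + η := by linarith
  have huIcc : Set.uIcc a b = Set.Icc a b := Set.uIcc_of_le hab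
  have habs : ∀ v ∈ Set.uIcc a b, (2 : ℝ) * Real.log |v - η| * v = 2 * Real.log (v - η) * v := by
    intro v hv
    rw [Real.log_abs]
  rw [intervalIntegral.integral_congr habs]
  -- FTC
  have key : (∫ v in a..b, 2 * Real.log (v - η) * v)
      = ((b^2 - η^2) * Real.log (b - η) - b^2/2 - η*b)
        - ((a^2 - η^2) * Real.log (a - η) - a^2/2 - η*a) := by
    apply intervalIntegral.integral_eq_sub_of_hasDerivAt
        (f := fun v => (v^2 - η^2) * Real.log (v - η) - v^2/2 - η*v)
    · intro x hx
      rw [huIcc, Set.mem_Icc] at hx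
      have hxη : 0 < x - η := by linarith [hx.1]
      have H1 : HasDerivAt (fun v : ℝ => v - η) 1 x := (hasDerivAt_id x).sub_const η
      have H2 : HasDerivAt (fun v : ℝ => Real.log (v - η)) (x - η)⁻¹ x := by
        have := (Real.hasDerivAt_log hxη.ne').comp x H1
        simpa [Function.comp_def] using this
      have H3 : HasDerivAt (fun v : ℝ => (v^2 - η^2)) (2*x) x := by
        have := (hasDerivAt_pow 2 x).sub_const (η^2)
        simpa using this
      have H4 := H3.mul H2
      have H5 : HasDerivAt (fun v : ℝ => v^2/2) x x := by
        have := (hasDerivAt_pow 2 x).div_const 2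
        simpa using this
      have H6 : HasDerivAt (fun v : ℝ => η*v) η x := by
        have := (hasDerivAt_id x).const_mul η
        simpa using this
      have := (H4.sub H5).sub H6
      convert this using 1
      · rfl
      field_simp
      ring
    · apply ContinuousOn.intervalIntegrable
      apply ContinuousOn.mul
      · apply ContinuousOn.mul continuousOn_const
        apply ContinuousOn.log
        · fun_prop
        · intro x hx
          rw [huIcc, Set.mem_Icc] at hx
          have : η < x := lt_of_lt_of_le hηa hx.1
          intro hcon
          nlinarith
      · exact continuousOn_id
  rw [key]
  -- log decompositions
  have hbη : 0 < b - η := by linarith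
  have haη : 0 < a - η := by linarith
  have hrel1 : Real.log (b - η) = Real.log (b^2 - η^2) - Real.log (b + η) := by
    rw [show b^2 - η^2 = (b - η) * (b + η) by ring, Real.log_mul hbη.ne' hbηp.ne']
    ring
  have hrel2 : Real.log (a - η) = Real.log (a^2 - η^2) - Real.log (a + η) := by
    rw [show a^2 - η^2 = (a - η) * (a + η) by ring, Real.log_mul haη.ne' haηp.ne']
    ring
  rw [hrel1, hrel2]
  clear key habs huIcc hrel1 hrel2
  have ht0 : 0 < a^2 - η^2 := by nlinarith
  have ht1 : a^2 - η^2 < 1 := by nlinarith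
  have hL5 : 0 ≤ Real.log (b^2 - η^2) := Real.log_nonneg (by nlinarith)
  have hii : Real.log 2 + Real.log (a^2 - η^2) ≤ Real.log (b^2 - η^2) := by
    have h := Real.log_le_log (by positivity : (0:ℝ) < 2 * (a^2 - η^2))
      (by nlinarith : 2*(a^2 - η^2) ≤ b^2 - η^2)
    rwa [Real.log_mul two_ne_zero ht0.ne'] at h
  have hiii : Real.log (b + η) - Real.log (a + η) ≤ 1/2 := by
    have hba : b - a ≤ 1/2 := by nlinarith
    have h := Real.log_le_sub_one_of_pos (div_pos hbηp haηp)
    rw [Real.log_div hbηp.ne' haηp.ne'] at h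
    have hle : (b+η)/(a+η) ≤ 3/2 := by
      rw [div_le_iff₀ haηp]
      linarith
    linarith
  have hiv : (1:ℝ)/2 ≤ Real.log 2 := by
    have := Real.log_two_gt_d9
    linarith
  have hv : Real.log (b + η) ≤ Real.log 2 + Real.log b := by
    have h := Real.log_le_log hbηp (by linarith : b + η ≤ 2 * b)
    rwa [Real.log_mul two_ne_zero hbpos.ne'] at h
  have hvi : η * (b - a) ≤ 1/2 := by
    nlinarith [mul_nonneg (sub_nonneg.2 hab) (by linarith : (0:ℝ) ≤ a + b - 2*η)]
  have hL9 : Real.log (μ + 1) = 2 * Real.log b := by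
    rw [← hb2, Real.log_pow]
    push_cast
    ring
  have hhalf : Real.log (1/2 : ℝ) = - Real.log 2 := by
    rw [one_div, Real.log_inv]
  rw [hL9, hhalf]
  have htX : 0 ≤ (a^2 - η^2) * (Real.log (b^2 - η^2) - Real.log (a^2 - η^2)
      - Real.log (b + η) + Real.log (a + η)) :=
    mul_nonneg ht0.le (by linarith)
  have hsub : b^2 = a^2 + 1 := by linarith
  have hkey : (b^2 - η^2) * (Real.log (b^2 - η^2) - Real.log (b + η))
      = (a^2 - η^2) * (Real.log (b^2 - η^2) - Real.log (b + η))
        + (Real.log (b^2 - η^2) - Real.log (b + η)) := by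
    linear_combination (Real.log (b^2 - η^2) - Real.log (b + η)) * hsub
  linarith [htX, hL5, hv, hvi, hkey, hsub]

theorem stmt_15 (m : ℤ) (η : ℝ) (hη : 0 < η)
    (h1 : (m : ℝ) - 1 < η ^ 2) (h2 : η ^ 2 < (m : ℝ)) :
    -(1 / 2) * Real.log ((m : ℝ) + 1) + Real.log (1 / 2) - 1 ≤
      ∫ v in Real.sqrt (m : ℝ)..Real.sqrt ((m : ℝ) + 1), 2 * Real.log |v - η| * v := by
  have hm0 : (0:ℝ) < (m:ℝ) := lt_trans (by positivity) h2
  have hm1 : (1:ℝ) ≤ (m:ℝ) := by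
    have h : (0:ℤ) < m := by exact_mod_cast hm0
    have : (1:ℤ) ≤ m := h
    exact_mod_cast this
  exact stmt_15_aux (m:ℝ) η _ _ hη hm1 h1 h2 (Real.sq_sqrt hm0.le)
    (Real.sq_sqrt (by linarith)) (Real.sqrt_nonneg _) (Real.sqrt_nonneg _)
end

section
/- Let m be a nonnegative integer and η > 0 a real number with m < η² < m + 1. Then (m + 1 − η²)·log(√(m+1) − η) + (η² − m)·log(η − √m) ≥ −(1/2)·log(m + 1) + log(1/4). -/
theorem stmt_16 (m : ℕ) (η : ℝ) (hη : 0 < η)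
    (h1 : (m : ℝ) < η ^ 2) (h2 : η ^ 2 < (m : ℝ) + 1) :
    -(1 / 2) * Real.log ((m : ℝ) + 1) + Real.log (1 / 4) ≤
      ((m : ℝ) + 1 - η ^ 2) * Real.log (Real.sqrt ((m : ℝ) + 1) - η) +
        (η ^ 2 - (m : ℝ)) * Real.log (η - Real.sqrt (m : ℝ)) := by
  set s := Real.sqrt ((m : ℝ) + 1) with hs
  set t := Real.sqrt (m : ℝ) with ht
  have hm0 : (0:ℝ) ≤ (m:ℝ) := Nat.cast_nonneg m
  have hs2 : s ^ 2 = (m : ℝ) + 1 := Real.sq_sqrt (by linarith)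
  have ht2 : t ^ 2 = (m : ℝ) := Real.sq_sqrt hm0
  have hts : t < s := by
    apply Real.sqrt_lt_sqrt hm0; linarith
  have hηs : η < s := by
    nlinarith [Real.sqrt_nonneg ((m:ℝ)+1), hs2]
  have htη : t < η := by
    nlinarith [Real.sqrt_nonneg (m:ℝ), ht2]
  have ht0 : 0 ≤ t := Real.sqrt_nonneg _
  have hspos : 0 < s := lt_of_le_of_lt ht0 hts
  set a := s - η with ha
  set b := η - t with hb
  have ha0 : 0 < a := by rw [ha]; linarith
  have hb0 : 0 < b := by rw [hb]; linarith
  set W := s + t + 2 * η with hW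
  clear_value s t
  clear_value a b
  clear_value W
  have hW0 : 0 < W := by rw [hW]; linarith
  have key : (s + η) * a + (η + t) * b = 1 := by
    have : (s + η) * a + (η + t) * b = s^2 - t^2 := by rw [ha, hb]; ring
    rw [this, hs2, ht2]; ring
  -- Jensen
  have hcv := Real.convexOn_mul_log.2 (Set.mem_Ici.2 ha0.le) (Set.mem_Ici.2 hb0.le)
    (show (0:ℝ) ≤ (s + η) / W by positivity)
    (show (0:ℝ) ≤ (η + t) / W by positivity)
    (show (s + η) / W + (η + t) / W = 1 by field_simp [hW]; rw [hW]; ring)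
  have hcomb : (s + η) / W * a + (η + t) / W * b = 1 / W := by
    field_simp
    linarith [key]
  simp only [smul_eq_mul] at hcv
  rw [hcomb] at hcv
  have hjensen : Real.log (1 / W) ≤
      ((m : ℝ) + 1 - η ^ 2) * Real.log a + (η ^ 2 - (m : ℝ)) * Real.log b := by
    have h := mul_le_mul_of_nonneg_left hcv hW0.le
    have e1 : W * (1 / W * Real.log (1 / W)) = Real.log (1 / W) := by
      field_simp
    have e2 : W * ((s + η) / W * (a * Real.log a) + (η + t) / W * (b * Real.log b))
        = ((s + η) * a) * Real.log a + ((η + t) * b) * Real.log b := by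
      field_simp
    rw [e1, e2] at h
    have e3 : (s + η) * a = (m : ℝ) + 1 - η ^ 2 := by rw [ha]; linear_combination hs2
    have e4 : (η + t) * b = η ^ 2 - (m : ℝ) := by rw [hb]; linear_combination -ht2
    rw [e3, e4] at h
    exact h
  refine le_trans ?_ hjensen
  have hW4 : W ≤ 4 * s := by linarith
  have hlogW : Real.log W ≤ Real.log (4 * s) := Real.log_le_log hW0 hW4
  have hls : Real.log s = 1 / 2 * Real.log ((m : ℝ) + 1) := by
    rw [hs, Real.log_sqrt (by linarith)]; ring
  rw [Real.log_div one_ne_zero (ne_of_gt hW0), Real.log_one,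
    Real.log_div one_ne_zero (by norm_num : (4:ℝ) ≠ 0), Real.log_one]
  have h4s : Real.log (4 * s) = Real.log 4 + Real.log s := by
    rw [Real.log_mul (by norm_num) (ne_of_gt hspos)]
  linarith [hlogW, h4s]
end
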